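/- Let P be a row-finite infinite matrix over a commutative ring, and define the output matrix A = 𝒪(P) by a_{nk} = (P^n)_{0k}. Let B be a lower-triangular matrix with invertible diagonal entries. Then A·B = b_{00} · 𝒪(B^{-1} P B). -/

import Mathlib

/-- Row-finite infinite matrices: each row is a finitely supported function. -/
def RFMat (R : Type*) [Zero R] := ℕ → (ℕ →₀ R)

namespace RFMat

variable {R : Type*} [CommRing R]

/-- Matrix product of row-finite matrices: `(P*Q)_{ik} = ∑_j P_{ij} Q_{jk}`. -/
noncomputable def mul (P Q : RFMat R) : RFMat R :=
  fun i => (P i).sum fun j a => a • Q j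

/-- The identity matrix. -/
noncomputable def one : RFMat R := fun i => Finsupp.single i 1

/-- Matrix power `P^n`. -/
noncomputable def pow (P : RFMat R) : ℕ → RFMat R
  | 0 => one
  | n + 1 => mul (pow P n) P

/-- The output matrix `𝒪(P)`, whose `n`-th row is the `0`-th row of `P^n`. -/
noncomputable def out (P : RFMat R) : RFMat R := fun n => pow P n 0

lemma mul_one' (P : RFMat R) : mul P one = P := by
  funext i
  show (P i).sum (fun j a => a • Finsupp.single j 1) = P i
  have : ∀ (j : ℕ) (a : R), a • Finsupp.single j (1 : R) = Finsupp.single j a := by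
    intro j a; rw [Finsupp.smul_single, smul_eq_mul, mul_one]
  simp only [this]
  exact Finsupp.sum_single (P i)

lemma one_mul' (P : RFMat R) : mul one P = P := by
  funext i
  show (Finsupp.single i (1 : R)).sum (fun j a => a • P j) = P i
  rw [Finsupp.sum_single_index (by simp)]
  simp

lemma mul_assoc' (P Q S : RFMat R) : mul (mul P Q) S = mul P (mul Q S) := by
  classical
  funext i
  let L : (ℕ →₀ R) →ₗ[R] (ℕ →₀ R) := Finsupp.linearCombination R S
  have hL : ∀ f : ℕ →₀ R, f.sum (fun j a => a • S j) = L f := by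
    intro f; exact (Finsupp.linearCombination_apply ..).symm
  show ((P i).sum fun j a => a • Q j).sum (fun j a => a • S j)
      = (P i).sum fun j a => a • ((Q j).sum fun k b => b • S k)
  rw [hL]
  simp only [hL]
  rw [map_finsuppSum]
  simp only [map_smul]

lemma row_zero (X : RFMat R) (hlt : ∀ i j : ℕ, i < j → X i j = 0)
    (Y : RFMat R) : mul X Y 0 = X 0 0 • Y 0 := by
  have hX : X 0 = Finsupp.single 0 (X 0 0) := by
    ext j
    cases j with
    | zero => simp
    | succ n => simp [hlt 0 (n+1) (Nat.succ_pos n)]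
  show (X 0).sum (fun j a => a • Y j) = X 0 0 • Y 0
  rw [hX, Finsupp.sum_single_index (by simp)]
  simp

end RFMat

/-- **right-multiplication lemma.** Let `P` be a row-finite
matrix, `A = 𝒪(P)` its output matrix, and `B` lower-triangular with (two-sided
lower-triangular) inverse `Binv`.  Then `A·B = B_{00} • 𝒪(B⁻¹ P B)`. -/
theorem output_matrix_right_multiplication {R : Type*} [CommRing R]
    (P B Binv : RFMat R)
    (hBlt : ∀ i j : ℕ, i < j → B i j = 0)
    (hBinvlt : ∀ i j : ℕ, i < j → Binv i j = 0)
    (hBB : RFMat.mul B Binv = RFMat.one)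
    (hBB' : RFMat.mul Binv B = RFMat.one) :
    RFMat.mul (RFMat.out P) B
      = fun n => B 0 0 • (RFMat.out (RFMat.mul (RFMat.mul Binv P) B) n) := by
  open RFMat in
  have key : ∀ n, pow (mul (mul Binv P) B) n = mul (mul Binv (pow P n)) B := by
    intro n
    induction n with
    | zero =>
      show one = mul (mul Binv one) B
      rw [mul_one', hBB']
    | succ n ih =>
      show mul (pow (mul (mul Binv P) B) n) (mul (mul Binv P) B)
          = mul (mul Binv (pow P (n+1))) B
      rw [ih]
      calc mul (mul (mul Binv (pow P n)) B) (mul (mul Binv P) B)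
          = mul (mul Binv (pow P n)) (mul B (mul (mul Binv P) B)) := mul_assoc' ..
        _ = mul (mul Binv (pow P n)) (mul (mul B (mul Binv P)) B) := by
              rw [mul_assoc' B]
        _ = mul (mul Binv (pow P n)) (mul (mul (mul B Binv) P) B) := by
              rw [mul_assoc' B Binv P]
        _ = mul (mul Binv (pow P n)) (mul P B) := by rw [hBB, one_mul']
        _ = mul Binv (mul (pow P n) (mul P B)) := mul_assoc' ..
        _ = mul Binv (mul (mul (pow P n) P) B) := by rw [mul_assoc' (pow P n)]
        _ = mul (mul Binv (mul (pow P n) P)) B := (mul_assoc' ..).symm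
  have hunit : B 0 0 * Binv 0 0 = 1 := by
    have h : RFMat.mul B Binv 0 = RFMat.one 0 := congrFun hBB 0
    rw [row_zero B hBlt Binv] at h
    have h2 := congrArg (fun f : ℕ →₀ R => f 0) h
    simpa [RFMat.one] using h2
  funext n
  show mul (out P) B n = B 0 0 • out (mul (mul Binv P) B) n
  have lhs : mul (out P) B n = mul (pow P n) B 0 := rfl
  rw [lhs]
  show mul (pow P n) B 0 = B 0 0 • pow (mul (mul Binv P) B) n 0
  rw [key n, show mul (mul Binv (pow P n)) B = mul Binv (mul (pow P n) B) from
    mul_assoc' .., row_zero Binv hBinvlt, smul_smul, hunit, one_smul]
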